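/- Let f : ℝ → ℝ satisfy f(x) → 0 as x → +∞, and let λ > 1 be a real number such that x^λ·(f(x) − f(x+1)) → l as x → +∞ for some real number l. Then x^{λ−1}·f(x) → l/(λ−1) as x → +∞. -/

import Mathlib

open Filter

private lemma rpow_anti14 {a b p : ℝ} (ha : 0 < a) (hab : a ≤ b) (hp : 0 ≤ p) :
    b ^ (-p) ≤ a ^ (-p) := by
  rw [Real.rpow_neg ha.le, Real.rpow_neg (ha.trans_le hab).le]
  exact inv_anti₀ (Real.rpow_pos_of_pos ha p) (Real.rpow_le_rpow ha.le hab hp)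

private lemma mvt_step14 {lam : ℝ} (hlam : 1 < lam) {a : ℝ} (ha : 0 < a) :
    (lam - 1) * (a + 1) ^ (-lam) ≤ a ^ (1 - lam) - (a + 1) ^ (1 - lam) ∧
    a ^ (1 - lam) - (a + 1) ^ (1 - lam) ≤ (lam - 1) * a ^ (-lam) := by
  obtain ⟨c, hc, hceq⟩ := exists_hasDerivAt_eq_slope (fun t : ℝ => t ^ (1 - lam))
    (fun t : ℝ => (1 - lam) * t ^ (-lam)) (by linarith : a < a + 1)
    (fun t ht => (Real.continuousAt_rpow_const t (1 - lam)
      (Or.inl (ne_of_gt (ha.trans_le ht.1)))).continuousWithinAt)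
    (fun t ht => by
      have h0 : t ≠ 0 := ne_of_gt (ha.trans ht.1)
      simpa [show (1 : ℝ) - lam - 1 = -lam by ring] using
        Real.hasDerivAt_rpow_const (x := t) (p := 1 - lam) (Or.inl h0))
  obtain ⟨hc1, hc2⟩ := hc
  have hc0 : 0 < c := ha.trans hc1
  have heq : a ^ (1 - lam) - (a + 1) ^ (1 - lam) = (lam - 1) * c ^ (-lam) := by
    have : (1 - lam) * c ^ (-lam) = (a + 1) ^ (1 - lam) - a ^ (1 - lam) := by
      rw [hceq]; ring_nf
    nlinarith [this]
  have hb1 : (a + 1) ^ (-lam) ≤ c ^ (-lam) := rpow_anti14 hc0 hc2.le (by linarith)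
  have hb2 : c ^ (-lam) ≤ a ^ (-lam) := rpow_anti14 ha hc1.le (by linarith)
  constructor
  · rw [heq]; nlinarith
  · rw [heq]; nlinarith

/-- The Mortici lemma: if `f → 0` at `+∞` and `x^λ (f x − f (x+1)) → l` with `λ > 1`,
then `x^(λ−1) f x → l/(λ−1)`. -/
theorem stmt14 (f : ℝ → ℝ) (hf : Tendsto f atTop (nhds 0))
    (lam l : ℝ) (hlam : 1 < lam)
    (h : Tendsto (fun x : ℝ => x ^ lam * (f x - f (x + 1))) atTop (nhds l)) :
    Tendsto (fun x : ℝ => x ^ (lam - 1) * f x) atTop (nhds (l / (lam - 1))) := by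
  have hl1 : (0 : ℝ) < lam - 1 := by linarith
  -- summability of the shifted p-series
  have hsum : ∀ x : ℝ, 0 < x → Summable (fun n : ℕ => (x + n) ^ (-lam)) := by
    intro x hx
    rw [← summable_nat_add_iff 1]
    have h0 : Summable (fun n : ℕ => ((n : ℝ)) ^ (-lam)) :=
      Real.summable_nat_rpow.2 (by linarith)
    have h1 : Summable (fun n : ℕ => ((n : ℝ) + 1) ^ (-lam)) := by
      have := (summable_nat_add_iff 1).2 h0
      simpa using this
    refine Summable.of_nonneg_of_le (fun n => ?_) (fun n => ?_) h1
    · positivity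
    · push_cast
      exact rpow_anti14 (by positivity) (by linarith) (by linarith)
  set S : ℝ → ℝ := fun x => ∑' n : ℕ, (x + n) ^ (-lam) with hSdef
  have hSnn : ∀ x : ℝ, 0 < x → 0 ≤ S x := fun x hx =>
    tsum_nonneg fun n => Real.rpow_nonneg (by positivity) _
  -- telescoping sum
  have htel : ∀ x : ℝ, 0 < x →
      HasSum (fun n : ℕ => (x + n) ^ (1 - lam) - (x + n + 1) ^ (1 - lam))
        (x ^ (1 - lam)) := by
    intro x hx
    have hterm := fun n : ℕ => mvt_step14 hlam (show (0:ℝ) < x + n by positivity)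
    have hsummt : Summable
        (fun n : ℕ => (x + n) ^ (1 - lam) - (x + n + 1) ^ (1 - lam)) := by
      refine Summable.of_nonneg_of_le (fun n => ?_) (fun n => (hterm n).2)
        ((hsum x hx).mul_left (lam - 1))
      have := (hterm n).1
      nlinarith [Real.rpow_nonneg (show (0:ℝ) ≤ x + n + 1 by positivity) (-lam)]
    rw [hsummt.hasSum_iff_tendsto_nat]
    have heq : ∀ N : ℕ, ∑ i ∈ Finset.range N,
        ((x + i) ^ (1 - lam) - (x + i + 1) ^ (1 - lam))
        = x ^ (1 - lam) - (x + N) ^ (1 - lam) := by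
      intro N
      have h0 := Finset.sum_range_sub' (fun i : ℕ => (x + i) ^ (1 - lam)) N
      simp only [Nat.cast_add, Nat.cast_one, ← add_assoc, Nat.cast_zero, add_zero] at h0
      exact h0
    simp only [heq]
    have h2 : Tendsto (fun N : ℕ => (x + N) ^ (1 - lam)) atTop (nhds 0) := by
      have ha : Tendsto (fun N : ℕ => x + (N : ℝ)) atTop atTop :=
        tendsto_atTop_add_const_left atTop x tendsto_natCast_atTop_atTop
      have := (tendsto_rpow_neg_atTop hl1).comp ha
      simpa [show -(lam - 1) = 1 - lam by ring, Function.comp_def] using this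
    simpa using tendsto_const_nhds.sub h2
  -- lower bound for S
  have hSlb : ∀ x : ℝ, 0 < x → x ^ (1 - lam) ≤ (lam - 1) * S x := by
    intro x hx
    have hle := Summable.tsum_le_tsum
      (fun n : ℕ => (mvt_step14 hlam (show (0:ℝ) < x + n by positivity)).2)
      (htel x hx).summable ((hsum x hx).mul_left (lam - 1))
    rw [(htel x hx).tsum_eq, tsum_mul_left] at hle
    exact hle
  -- upper bound for S
  have hSub : ∀ x : ℝ, 0 < x → (lam - 1) * S x ≤ x ^ (1 - lam) + (lam - 1) * x ^ (-lam) := by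
    intro x hx
    have hg1 : Summable (fun n : ℕ => (x + n + 1) ^ (-lam)) :=
      (hsum (x + 1) (by positivity)).congr fun n => by
        rw [show x + 1 + (n : ℝ) = x + n + 1 by ring]
    have hlow := Summable.tsum_le_tsum
      (fun n : ℕ => (mvt_step14 hlam (show (0:ℝ) < x + n by positivity)).1)
      (hg1.mul_left (lam - 1)) (htel x hx).summable
    rw [(htel x hx).tsum_eq, tsum_mul_left] at hlow
    have hz := Summable.tsum_eq_zero_add (hsum x hx)
    have hz2 : ∑' n : ℕ, (x + ((n : ℝ) + 1)) ^ (-lam) = ∑' n : ℕ, (x + n + 1) ^ (-lam) :=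
      tsum_congr fun n => by rw [add_assoc]
    simp only [Nat.cast_add, Nat.cast_one, Nat.cast_zero, add_zero] at hz
    rw [hz2] at hz
    -- hz : S x = x ^ (-lam) + ∑' n, (x + n + 1) ^ (-lam)
    have : S x = x ^ (-lam) + ∑' n : ℕ, (x + n + 1) ^ (-lam) := hz
    nlinarith [hlow, this]
  -- S asymptotics
  have hStend : Tendsto (fun x : ℝ => x ^ (lam - 1) * S x) atTop (nhds (1 / (lam - 1))) := by
    have hh : Tendsto (fun x : ℝ => 1 / (lam - 1) + x ^ (-(1:ℝ))) atTop
        (nhds (1 / (lam - 1))) := by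
      simpa using tendsto_const_nhds.add (tendsto_rpow_neg_atTop one_pos)
    refine tendsto_of_tendsto_of_tendsto_of_le_of_le' tendsto_const_nhds hh ?_ ?_
    · filter_upwards [eventually_gt_atTop (0:ℝ)] with x hx
      have h1 : x ^ (lam - 1) * x ^ (1 - lam) = 1 := by
        rw [← Real.rpow_add hx]; norm_num
      have hxp : (0:ℝ) ≤ x ^ (lam - 1) := Real.rpow_nonneg hx.le _
      have := mul_le_mul_of_nonneg_left (hSlb x hx) hxp
      rw [h1] at this
      rw [div_le_iff₀ hl1]
      nlinarith
    · filter_upwards [eventually_gt_atTop (0:ℝ)] with x hx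
      have h1 : x ^ (lam - 1) * x ^ (1 - lam) = 1 := by
        rw [← Real.rpow_add hx]; norm_num
      have h2 : x ^ (lam - 1) * x ^ (-lam) = x ^ (-(1:ℝ)) := by
        rw [← Real.rpow_add hx]; congr 1; ring
      have hxp : (0:ℝ) ≤ x ^ (lam - 1) := Real.rpow_nonneg hx.le _
      have hmul := mul_le_mul_of_nonneg_left (hSub x hx) hxp
      have key : (lam - 1) * (x ^ (lam - 1) * S x) ≤ 1 + (lam - 1) * x ^ (-(1:ℝ)) := by
        nlinarith [hmul]
      rw [← sub_nonneg]
      have hd : 1 / (lam - 1) + x ^ (-(1:ℝ)) - x ^ (lam - 1) * S x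
          = (1 + (lam - 1) * x ^ (-(1:ℝ)) - (lam - 1) * (x ^ (lam - 1) * S x)) / (lam - 1) := by
        field_simp
      rw [hd]
      exact div_nonneg (by linarith [key]) hl1.le
  -- main estimate
  have hmain : ∀ ε : ℝ, 0 < ε → ∀ᶠ x : ℝ in atTop,
      |x ^ (lam - 1) * f x - l * (x ^ (lam - 1) * S x)| ≤ ε * (x ^ (lam - 1) * S x) := by
    intro ε hε
    have hev := Metric.tendsto_nhds.1 h ε hε
    rw [eventually_atTop] at hev
    obtain ⟨X, hX⟩ := hev
    filter_upwards [eventually_ge_atTop (max X 1)] with x hxX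
    have hx1 : (1:ℝ) ≤ x := le_trans (le_max_right X 1) hxX
    have hx : (0:ℝ) < x := lt_of_lt_of_le one_pos hx1
    have hptb : ∀ n : ℕ, |(f (x + n) - f (x + n + 1)) - l * (x + n) ^ (-lam)|
        ≤ ε * (x + n) ^ (-lam) := by
      intro n
      have hy : X ≤ x + n := le_trans (le_trans (le_max_left X 1) hxX)
        (by linarith [Nat.cast_nonneg (α := ℝ) n])
      have hd := hX (x + n) hy
      rw [Real.dist_eq] at hd
      have hy0 : (0:ℝ) < x + n := by positivity
      have hyy : (x + n) ^ (-lam) * (x + n) ^ lam = 1 := by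
        rw [← Real.rpow_add hy0]; norm_num
      have key : f (x + n) - f (x + n + 1) - l * (x + n) ^ (-lam)
          = (x + n) ^ (-lam) * ((x + n) ^ lam * (f (x + n) - f (x + n + 1)) - l) := by
        rw [mul_sub, ← mul_assoc, hyy, one_mul]; ring
      rw [key, abs_mul, abs_of_nonneg (Real.rpow_nonneg hy0.le _)]
      calc (x + n) ^ (-lam) * |(x + n) ^ lam * (f (x + n) - f (x + n + 1)) - l|
          ≤ (x + n) ^ (-lam) * ε :=
            mul_le_mul_of_nonneg_left hd.le (Real.rpow_nonneg hy0.le _)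
        _ = ε * (x + n) ^ (-lam) := mul_comm _ _
    have hgsum := hsum x hx
    have hgnn : ∀ n : ℕ, (0:ℝ) ≤ (x + n) ^ (-lam) :=
      fun n => Real.rpow_nonneg (by positivity) _
    have hdsum : Summable (fun n : ℕ => f (x + n) - f (x + n + 1)) := by
      refine Summable.of_norm_bounded (hgsum.mul_left (|l| + ε)) (fun n => ?_)
      have h1 := hptb n
      have h2 : |l * (x + n) ^ (-lam)| ≤ |l| * (x + n) ^ (-lam) := by
        rw [abs_mul, abs_of_nonneg (hgnn n)]
      calc ‖f (x + n) - f (x + n + 1)‖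
          = |(f (x + n) - f (x + n + 1) - l * (x + n) ^ (-lam)) + l * (x + n) ^ (-lam)| := by
            rw [Real.norm_eq_abs]; ring_nf
        _ ≤ |f (x + n) - f (x + n + 1) - l * (x + n) ^ (-lam)| + |l * (x + n) ^ (-lam)| :=
            abs_add_le _ _
        _ ≤ ε * (x + n) ^ (-lam) + |l| * (x + n) ^ (-lam) := add_le_add h1 h2
        _ = (|l| + ε) * (x + n) ^ (-lam) := by ring
    have hdhs : HasSum (fun n : ℕ => f (x + n) - f (x + n + 1)) (f x) := by
      rw [hdsum.hasSum_iff_tendsto_nat]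
      have heq : ∀ N : ℕ, ∑ i ∈ Finset.range N, (f (x + i) - f (x + i + 1))
          = f x - f (x + N) := by
        intro N
        have h0 := Finset.sum_range_sub' (fun i : ℕ => f (x + i)) N
        simp only [Nat.cast_add, Nat.cast_one, ← add_assoc, Nat.cast_zero, add_zero] at h0
        exact h0
      simp only [heq]
      have h2 : Tendsto (fun N : ℕ => f (x + N)) atTop (nhds 0) :=
        hf.comp (tendsto_atTop_add_const_left atTop x tendsto_natCast_atTop_atTop)
      simpa using tendsto_const_nhds.sub h2
    have hlg : Summable (fun n : ℕ => l * (x + n) ^ (-lam)) := hgsum.mul_left l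
    have hesum : Summable (fun n : ℕ => (f (x + n) - f (x + n + 1)) - l * (x + n) ^ (-lam)) :=
      hdsum.sub hlg
    have habs : |f x - l * S x| ≤ ε * S x := by
      have h1 : f x - l * S x
          = ∑' n : ℕ, ((f (x + n) - f (x + n + 1)) - l * (x + n) ^ (-lam)) := by
        rw [Summable.tsum_sub hdsum hlg, hdhs.tsum_eq, tsum_mul_left]
      rw [h1]
      calc |∑' n : ℕ, ((f (x + n) - f (x + n + 1)) - l * (x + n) ^ (-lam))|
          ≤ ∑' n : ℕ, |(f (x + n) - f (x + n + 1)) - l * (x + n) ^ (-lam)| := by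
            simpa [Real.norm_eq_abs] using
              norm_tsum_le_tsum_norm (f := fun n : ℕ =>
                (f (x + n) - f (x + n + 1)) - l * (x + n) ^ (-lam))
                (by simpa [Real.norm_eq_abs] using hesum.abs)
        _ ≤ ∑' n : ℕ, ε * (x + n) ^ (-lam) :=
            Summable.tsum_le_tsum (fun n => hptb n) hesum.abs (hgsum.mul_left ε)
        _ = ε * S x := tsum_mul_left
    have hxp : (0:ℝ) ≤ x ^ (lam - 1) := Real.rpow_nonneg hx.le _
    have hre : x ^ (lam - 1) * f x - l * (x ^ (lam - 1) * S x)
        = x ^ (lam - 1) * (f x - l * S x) := by ring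
    rw [hre, abs_mul, abs_of_nonneg hxp]
    calc x ^ (lam - 1) * |f x - l * S x| ≤ x ^ (lam - 1) * (ε * S x) :=
          mul_le_mul_of_nonneg_left habs hxp
      _ = ε * (x ^ (lam - 1) * S x) := by ring
  -- conclude
  have hA : Tendsto (fun x : ℝ => x ^ (lam - 1) * f x - l * (x ^ (lam - 1) * S x))
      atTop (nhds 0) := by
    rw [NormedAddCommGroup.tendsto_nhds_zero]
    intro ε hε
    have hC : (0:ℝ) < 1 / (lam - 1) + 1 := by positivity
    have hε' : (0:ℝ) < ε / (2 * (1 / (lam - 1) + 1)) := by positivity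
    have hbd : ∀ᶠ x : ℝ in atTop, x ^ (lam - 1) * S x ≤ 1 / (lam - 1) + 1 :=
      hStend.eventually_le_const (by linarith)
    filter_upwards [hmain _ hε', hbd, eventually_gt_atTop (0:ℝ)] with x h1 h2 hx
    have hnn : (0:ℝ) ≤ x ^ (lam - 1) * S x :=
      mul_nonneg (Real.rpow_nonneg hx.le _) (hSnn x hx)
    rw [Real.norm_eq_abs]
    calc |x ^ (lam - 1) * f x - l * (x ^ (lam - 1) * S x)|
        ≤ ε / (2 * (1 / (lam - 1) + 1)) * (x ^ (lam - 1) * S x) := h1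
      _ ≤ ε / (2 * (1 / (lam - 1) + 1)) * (1 / (lam - 1) + 1) :=
          mul_le_mul_of_nonneg_left h2 hε'.le
      _ = ε / 2 := by field_simp
      _ < ε := by linarith
  have hfin := hA.add (hStend.const_mul l)
  simp only [sub_add_cancel, zero_add] at hfin
  have : l * (1 / (lam - 1)) = l / (lam - 1) := by ring
  rwa [this] at hfin
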